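/- Let φ : ℝ → ℝ² be a smooth parametrization of the unit circle of a smooth normed plane by arc-length, and ψ(t) = φ'(t)/ω(φ(t),φ'(t)) the dual parametrization of the anti-circle. If a smooth curve γ has γ'(t) = ρ(t)·φ'(t) with ρ smooth, then its evolute ξ(t) = γ(t) - ρ(t)·φ(t) satisfies ξ'(t) = (ρ'(t)/ω(ψ(t),ψ'(t)))·ψ'(t); in particular ξ'(t) is parallel to ψ'(t). -/

import Mathlib

/-- the evolute `ξ(t) = γ(t) - ρ(t)·φ(t)` of a curve `γ` with
`γ'(t) = ρ(t)·φ'(t)` satisfies `ξ'(t) = (ρ'(t)/ω(ψ(t),ψ'(t)))·ψ'(t)`, where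
`ψ(t) = φ'(t)/ω(φ(t),φ'(t))` is the dual parametrization of the anti-circle. -/
theorem evolute_derivative
    (ω : (ℝ × ℝ) →ₗ[ℝ] (ℝ × ℝ) →ₗ[ℝ] ℝ)
    (hskew : ∀ x y, ω x y = - ω y x)
    (hnondeg : ∀ x, (∀ y, ω x y = 0) → x = 0)
    (φ ψ γ : ℝ → ℝ × ℝ) (φd ψd : ℝ → ℝ × ℝ) (ρ ρd : ℝ → ℝ)
    (hφ : ∀ t, HasDerivAt φ (φd t) t)
    (hψ : ∀ t, HasDerivAt ψ (ψd t) t)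
    (hρ : ∀ t, HasDerivAt ρ (ρd t) t)
    (hψdef : ∀ t, ψ t = (ω (φ t) (φd t))⁻¹ • φd t)
    (hdual : ∀ t, φ t = -((ω (ψ t) (ψd t))⁻¹) • ψd t)
    (hγ : ∀ t, HasDerivAt γ (ρ t • φd t) t)
    (t : ℝ) :
    HasDerivAt (fun s => γ s - ρ s • φ s) ((ρd t / ω (ψ t) (ψd t)) • ψd t) t := by
  have h := (hγ t).sub ((hρ t).smul (hφ t))
  convert h using 1
  · rfl
  · rfl
  · rfl
  · rfl
  rw [hdual t, smul_smul, sub_add_cancel_left, ← neg_smul, div_eq_mul_inv]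
  ring_nf
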